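/- Let p be an odd prime and let G = D_p^{n−1} × C_p, where D_p = ⟨r_i, s_i⟩ is the dihedral group of order 2p with r_i of order p and s_i of order 2, and C_p = ⟨r_n⟩. Let H = ⟨r_1 r_n, r_2 r_n, …, r_{n−1} r_n⟩. Then every subgroup B of G with H < B ≤ G (strict containment) contains r_n. -/

import Mathlib

theorem subgroup_strictly_above_H_contains_rn (p : ℕ) (hp : p.Prime) (hodd : Odd p) (m : ℕ)
    (H : Subgroup ((Fin m → DihedralGroup p) × Multiplicative (ZMod p)))
    (hH : H = Subgroup.closure (Set.range fun i : Fin m =>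
      ((Pi.mulSingle i (DihedralGroup.r 1) : Fin m → DihedralGroup p),
        Multiplicative.ofAdd (1 : ZMod p))))
    (B : Subgroup ((Fin m → DihedralGroup p) × Multiplicative (ZMod p)))
    (hB : H < B) :
    ((1 : Fin m → DihedralGroup p), Multiplicative.ofAdd (1 : ZMod p)) ∈ B := by
  haveI : Fact p.Prime := ⟨hp⟩
  set G := (Fin m → DihedralGroup p) × Multiplicative (ZMod p)
  set g : Fin m → G := fun i =>
    ((Pi.mulSingle i (DihedralGroup.r 1) : Fin m → DihedralGroup p),
      Multiplicative.ofAdd (1 : ZMod p)) with hg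
  have hgH : ∀ i, g i ∈ H := fun i => by
    rw [hH]; exact Subgroup.subset_closure ⟨i, rfl⟩
  have hgB : ∀ i, g i ∈ B := fun i => hB.le (hgH i)
  -- key step: from a central element with nonzero exponent, get exponent 1
  have key : ∀ u : ZMod p, u ≠ 0 →
      ((1 : Fin m → DihedralGroup p), Multiplicative.ofAdd u) ∈ B →
      ((1 : Fin m → DihedralGroup p), Multiplicative.ofAdd (1 : ZMod p)) ∈ B := by
    intro u hu hmem
    have hpow := B.pow_mem hmem (u⁻¹).val
    have heq : (((1 : Fin m → DihedralGroup p), Multiplicative.ofAdd u) : G) ^ (u⁻¹).val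
        = ((1 : Fin m → DihedralGroup p), Multiplicative.ofAdd (1 : ZMod p)) := by
      rw [Prod.pow_mk, one_pow, ← ofAdd_nsmul, nsmul_eq_mul]
      congr 2
      rw [ZMod.natCast_val, ZMod.cast_id]
      exact inv_mul_cancel₀ hu
    rwa [heq] at hpow
  obtain ⟨b, hbB, hbH⟩ := SetLike.exists_of_lt hB
  by_cases hrot : ∀ k, ∃ a : ZMod p, b.1 k = DihedralGroup.r a
  · -- all coordinates rotations
    choose a ha using hrot
    have hmem : ∀ s : Finset (Fin m),
        (((fun i => if i ∈ s then DihedralGroup.r (a i) else 1) : Fin m → DihedralGroup p),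
          Multiplicative.ofAdd (∑ i ∈ s, a i)) ∈ H := by
      intro s
      induction s using Finset.induction_on with
      | empty =>
        have : (((fun i => if i ∈ (∅ : Finset (Fin m)) then DihedralGroup.r (a i) else 1) :
            Fin m → DihedralGroup p),
            Multiplicative.ofAdd (∑ i ∈ (∅ : Finset (Fin m)), a i)) = (1 : G) := by
          refine Prod.ext ?_ ?_ <;> simp <;> try rfl
        rw [this]; exact H.one_mem
      | @insert i s hi ih =>
        have step : (((fun t => if t ∈ insert i s then DihedralGroup.r (a t) else 1) :
            Fin m → DihedralGroup p),
            Multiplicative.ofAdd (∑ t ∈ insert i s, a t))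
            = g i ^ (a i).val *
              (((fun t => if t ∈ s then DihedralGroup.r (a t) else 1) :
                Fin m → DihedralGroup p),
                Multiplicative.ofAdd (∑ t ∈ s, a t)) := by
          refine Prod.ext ?_ ?_
          · show _ = (Pi.mulSingle i (DihedralGroup.r 1) : Fin m → DihedralGroup p) ^ (a i).val * _
            funext t
            rw [← Pi.mulSingle_pow, DihedralGroup.r_one_pow, ZMod.natCast_val, ZMod.cast_id]
            simp only [Pi.mul_apply]
            by_cases ht : t = i
            · subst ht
              rw [Pi.mulSingle_eq_same, if_pos (Finset.mem_insert_self t s), if_neg hi,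
                mul_one]
            · rw [Pi.mulSingle_eq_of_ne ht, one_mul]
              congr 1
              simp [Finset.mem_insert, ht]
          · show Multiplicative.ofAdd (∑ t ∈ insert i s, a t)
              = Multiplicative.ofAdd (1 : ZMod p) ^ (a i).val * Multiplicative.ofAdd (∑ t ∈ s, a t)
            rw [← ofAdd_nsmul, ← ofAdd_add, Finset.sum_insert hi]
            congr 1
            rw [nsmul_eq_mul, mul_one, ZMod.natCast_val, ZMod.cast_id]
        rw [step]
        exact H.mul_mem (H.pow_mem (hgH i) _) ih
    have hhH : ((b.1 : Fin m → DihedralGroup p),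
        Multiplicative.ofAdd (∑ i, a i)) ∈ H := by
      have := hmem Finset.univ
      have e1 : ((fun i => if i ∈ (Finset.univ : Finset (Fin m)) then DihedralGroup.r (a i)
          else 1) : Fin m → DihedralGroup p) = b.1 := by
        funext t; rw [if_pos (Finset.mem_univ t)]; exact (ha t).symm
      rwa [e1] at this
    set h : G := (b.1, Multiplicative.ofAdd (∑ i, a i)) with hh
    set u : ZMod p := (b * h⁻¹).2.toAdd with hu
    have hbu : b * h⁻¹ = ((1 : Fin m → DihedralGroup p), Multiplicative.ofAdd u) := by
      refine Prod.ext ?_ ?_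
      · show b.1 * b.1⁻¹ = 1
        rw [mul_inv_cancel]
      · rfl
    have huz : u ≠ 0 := by
      intro h0
      apply hbH
      have h1 : b * h⁻¹ = 1 := by rw [hbu, h0]; rfl
      rw [mul_inv_eq_one] at h1
      rw [h1]; exact hhH
    have : ((1 : Fin m → DihedralGroup p), Multiplicative.ofAdd u) ∈ B := by
      rw [← hbu]; exact B.mul_mem hbB (B.inv_mem (hB.le hhH))
    exact key u huz this
  · -- some coordinate is a reflection
    push_neg at hrot
    obtain ⟨k, hk⟩ := hrot
    obtain ⟨j, hj⟩ : ∃ j : ZMod p, b.1 k = DihedralGroup.sr j := by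
      cases hbk : b.1 k with
      | r a => exact absurd hbk (hk a)
      | sr j => exact ⟨j, rfl⟩
    set c : G := g k * b * (g k)⁻¹ * b⁻¹ with hc
    have hcB : c ∈ B :=
      B.mul_mem (B.mul_mem (B.mul_mem (hgB k) hbB) (B.inv_mem (hgB k))) (B.inv_mem hbB)
    have he : (g k) ^ 2 * c⁻¹ = ((1 : Fin m → DihedralGroup p),
        Multiplicative.ofAdd (2 : ZMod p)) := by
      refine Prod.ext ?_ ?_
      · show ((g k).1) ^ 2 * ((g k).1 * b.1 * ((g k).1)⁻¹ * (b.1)⁻¹)⁻¹ = 1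
        funext t
        simp only [Pi.mul_apply, Pi.inv_apply, Pi.pow_apply, hg]
        by_cases ht : t = k
        · subst ht
          rw [Pi.mulSingle_eq_same, hj]
          show (DihedralGroup.r 1) ^ 2 *
            ((DihedralGroup.r 1) * DihedralGroup.sr j * (DihedralGroup.r 1)⁻¹ *
              (DihedralGroup.sr j)⁻¹)⁻¹ = 1
          rw [pow_two]
          show DihedralGroup.r (1 + 1 + -(j - (j - 1 + -1))) = 1
          rw [DihedralGroup.one_def]
          congr 1
          ring
        · rw [Pi.mulSingle_eq_of_ne ht]
          simp
      · show (Multiplicative.ofAdd (1:ZMod p)) ^ 2 *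
          (Multiplicative.ofAdd (1:ZMod p) * b.2 * (Multiplicative.ofAdd (1:ZMod p))⁻¹ *
            b.2⁻¹)⁻¹ = Multiplicative.ofAdd (2 : ZMod p)
        apply Multiplicative.toAdd.injective
        simp only [toAdd_mul, toAdd_inv, toAdd_pow, toAdd_ofAdd]
        ring
    have h2B : ((1 : Fin m → DihedralGroup p), Multiplicative.ofAdd (2 : ZMod p)) ∈ B := by
      rw [← he]; exact B.mul_mem (B.pow_mem (hgB k) 2) (B.inv_mem hcB)
    have h2 : (2 : ZMod p) ≠ 0 := by
      intro h0
      have hdvd : (p : ℕ) ∣ 2 :=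
        (ZMod.natCast_eq_zero_iff 2 p).mp (by exact_mod_cast h0)
      have hp2 : p = 2 := (Nat.prime_dvd_prime_iff_eq hp Nat.prime_two).mp hdvd
      rw [Nat.odd_iff] at hodd
      omega
    exact key 2 h2 h2B
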